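/- Let A₁, A₂ be positive semidefinite matrices on a finite-dimensional complex Hilbert space, let p ∈ [0,1], and set A = p·A₁ + (1−p)·A₂. Then, in the Löwner order, −A log A ≤ −p·A₁ log A₁ − (1−p)·A₂ log A₂ + h_{A₁,A₂}(p)·𝟙, where h_{A₁,A₂}(p) = −p·log(p)·tr[A₁] − (1−p)·log(1−p)·tr[A₂] (with the convention 0·log 0 = 0). -/

import Mathlib

open Matrix MeasureTheory
open scoped Kronecker Classical ComplexOrder

noncomputable section

namespace QPaper

variable {n : Type*}

/-- A quantum state: positive semidefinite matrix with trace one. -/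
def IsState [Fintype n] (ρ : Matrix n n ℂ) : Prop :=
  ρ.PosSemidef ∧ ρ.trace = 1

/-- The trace norm of a matrix: `tr √(XᴴX)`. -/
noncomputable def traceNorm [Fintype n] [DecidableEq n] (X : Matrix n n ℂ) : ℝ :=
  (((Matrix.posSemidef_conjTranspose_mul_self X).1.eigenvectorUnitary : Matrix n n ℂ) *
      Matrix.diagonal (((↑) : ℝ → ℂ) ∘ (√·) ∘ (Matrix.posSemidef_conjTranspose_mul_self X).1.eigenvalues) *
      (star (Matrix.posSemidef_conjTranspose_mul_self X).1.eigenvectorUnitary : Matrix n n ℂ)).trace.re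

/-- Functional calculus for Hermitian matrices: apply `f` to the eigenvalues. -/
noncomputable def matFun [Fintype n] [DecidableEq n] (f : ℝ → ℂ) (A : Matrix n n ℂ) :
    Matrix n n ℂ :=
  if hA : A.IsHermitian then
    (hA.eigenvectorUnitary : Matrix n n ℂ) *
      Matrix.diagonal (fun i => f (hA.eigenvalues i)) *
        (hA.eigenvectorUnitary : Matrix n n ℂ)ᴴ
  else 0

/-- Matrix logarithm on the support (0 ↦ 0). -/
noncomputable def mlog [Fintype n] [DecidableEq n] (A : Matrix n n ℂ) : Matrix n n ℂ :=
  matFun (fun x => (Real.log x : ℂ)) A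

/-- Real matrix powers on the support (Moore-Penrose style, 0 ↦ 0 for r ≠ 0). -/
noncomputable def mpow [Fintype n] [DecidableEq n] (A : Matrix n n ℂ) (r : ℝ) : Matrix n n ℂ :=
  matFun (fun x => ((x ^ r : ℝ) : ℂ)) A

/-- Complex matrix powers on the support (0 ↦ 0). -/
noncomputable def mcpow [Fintype n] [DecidableEq n] (A : Matrix n n ℂ) (z : ℂ) : Matrix n n ℂ :=
  matFun (fun x => if x = 0 then 0 else (x : ℂ) ^ z) A

/-- The matrix `A log A`, functional calculus for `x ↦ x log x` (0 ↦ 0). -/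
noncomputable def mXLogX [Fintype n] [DecidableEq n] (A : Matrix n n ℂ) : Matrix n n ℂ :=
  matFun (fun x => ((x * Real.log x : ℝ) : ℂ)) A

/-- Umegaki relative entropy `D(ρ‖K) = tr[ρ (log ρ - log K)]`. -/
noncomputable def relEnt [Fintype n] [DecidableEq n] (ρ K : Matrix n n ℂ) : ℝ :=
  ((ρ * (mlog ρ - mlog K)).trace).re

/-- Belavkin–Staszewski entropy `D̂(ρ‖K) = tr[ρ log(ρ^{1/2} K⁻¹ ρ^{1/2})]`. -/
noncomputable def bsEnt [Fintype n] [DecidableEq n] (ρ K : Matrix n n ℂ) : ℝ :=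
  ((ρ * mlog (mpow ρ (1/2) * mpow K (-1) * mpow ρ (1/2))).trace).re

/-- von Neumann entropy. -/
noncomputable def vnEnt [Fintype n] [DecidableEq n] (ρ : Matrix n n ℂ) : ℝ :=
  -(((ρ * mlog ρ).trace).re)

/-- Operator norm of a matrix. -/
noncomputable def opNorm [Fintype n] [DecidableEq n] (X : Matrix n n ℂ) : ℝ :=
  ‖Matrix.toEuclideanCLM (𝕜 := ℂ) X‖

/-- `ker K ⊆ ker ρ`. -/
def kerLE [Fintype n] (K ρ : Matrix n n ℂ) : Prop :=
  ∀ v : n → ℂ, K.mulVec v = 0 → ρ.mulVec v = 0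

/-- partial trace over the first factor. -/
noncomputable def ptrA {a b : Type*} [Fintype a] (ρ : Matrix (a × b) (a × b) ℂ) :
    Matrix b b ℂ :=
  Matrix.of fun i j => ∑ x : a, ρ (x, i) (x, j)

/-- partial trace over the second factor. -/
noncomputable def ptrB {a b : Type*} [Fintype b] (ρ : Matrix (a × b) (a × b) ℂ) :
    Matrix a a ℂ :=
  Matrix.of fun i j => ∑ x : b, ρ (i, x) (j, x)

/-- partial trace over the middle factor of a tripartite system. -/
noncomputable def ptrMid {a b c : Type*} [Fintype b]
    (ρ : Matrix (a × b × c) (a × b × c) ℂ) : Matrix (a × c) (a × c) ℂ :=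
  Matrix.of fun p q => ∑ y : b, ρ (p.1, y, p.2) (q.1, y, q.2)

/-- Conditional entropy `H_ρ(A|B) = S(ρ_{AB}) - S(ρ_B)`. -/
noncomputable def condEnt {a b : Type*} [Fintype a] [Fintype b] [DecidableEq a] [DecidableEq b]
    (ρ : Matrix (a × b) (a × b) ℂ) : ℝ :=
  vnEnt ρ - vnEnt (ptrA ρ)

/-- Mutual information `I_ρ(A:B) = S(ρ_A) + S(ρ_B) - S(ρ_{AB})`. -/
noncomputable def mutInfo {a b : Type*} [Fintype a] [Fintype b] [DecidableEq a] [DecidableEq b]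
    (ρ : Matrix (a × b) (a × b) ℂ) : ℝ :=
  vnEnt (ptrB ρ) + vnEnt (ptrA ρ) - vnEnt ρ

/-- Conditional mutual information `I_ρ(A:B|C)`. -/
noncomputable def condMutInfo {a b c : Type*} [Fintype a] [Fintype b] [Fintype c]
    [DecidableEq a] [DecidableEq b] [DecidableEq c]
    (ρ : Matrix (a × b × c) (a × b × c) ℂ) : ℝ :=
  vnEnt (ptrMid ρ) + vnEnt (ptrA ρ) - vnEnt (ptrA (ptrA ρ)) - vnEnt ρ

/-- BS-conditional entropy `Ĥ_ρ(A|B) = -D̂(ρ ‖ 𝟙_A ⊗ ρ_B)`. -/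
noncomputable def bsCondEnt {a b : Type*} [Fintype a] [Fintype b] [DecidableEq a] [DecidableEq b]
    (ρ : Matrix (a × b) (a × b) ℂ) : ℝ :=
  -(bsEnt ρ ((1 : Matrix a a ℂ) ⊗ₖ ptrA ρ))

/-- BS-mutual information `Î_ρ(A:B) = D̂(ρ ‖ ρ_A ⊗ ρ_B)`. -/
noncomputable def bsMutInfo {a b : Type*} [Fintype a] [Fintype b] [DecidableEq a] [DecidableEq b]
    (ρ : Matrix (a × b) (a × b) ℂ) : ℝ :=
  bsEnt ρ (ptrB ρ ⊗ₖ ptrA ρ)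

/-- BS-conditional mutual information `Î_ρ(A:B|C) = Ĥ_ρ(A|C) - Ĥ_ρ(A|BC)`. -/
noncomputable def bsCondMutInfo {a b c : Type*} [Fintype a] [Fintype b] [Fintype c]
    [DecidableEq a] [DecidableEq b] [DecidableEq c]
    (ρ : Matrix (a × b × c) (a × b × c) ℂ) : ℝ :=
  bsCondEnt (ptrMid ρ) - bsCondEnt (a := a) (b := b × c) ρ

/-- Binary entropy. -/
noncomputable def binEnt (p : ℝ) : ℝ :=
  -(p * Real.log p) - (1 - p) * Real.log (1 - p)

/-- The function `f_{c₁,c₂}`. -/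
noncomputable def fcc (c₁ c₂ p : ℝ) : ℝ :=
  p * Real.log (p + (1 - p) * c₁) + (1 - p) * Real.log ((1 - p) + p * c₂)

/-- The probability density `β₀`. -/
noncomputable def beta0 (t : ℝ) : ℝ :=
  (Real.pi / 2) * (Real.cosh (Real.pi * t) + 1)⁻¹


/- ===================== Auxiliary machinery for almost_concavity_xlogx ==================== -/

section AC

set_option maxHeartbeats 2000000

open Complex Set

variable {d : ℕ}

/-- Spectral data for a matrix: a unitary frame with real (nonnegative) diagonal values. -/
structure SpecData (d : ℕ) where
  X : Matrix (Fin d) (Fin d) ℂ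
  U : Matrix (Fin d) (Fin d) ℂ
  e : Fin d → ℝ
  hU : U * star U = 1
  hU' : star U * U = 1
  hX : X = U * Matrix.diagonal (fun i => (e i : ℂ)) * star U
  he : ∀ i, 0 ≤ e i

namespace SpecData

/-- Apply a real function on the diagonal in the frame. -/
noncomputable def framed (s : SpecData d) (g : ℝ → ℝ) : Matrix (Fin d) (Fin d) ℂ :=
  s.U * Matrix.diagonal (fun i => (g (s.e i) : ℂ)) * star s.U

/-- coordinates of `v` in the frame -/
noncomputable def w (s : SpecData d) (v : Fin d → ℂ) : Fin d → ℂ := star s.U *ᵥ v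

/-- squared moduli of the coordinates -/
noncomputable def nn (s : SpecData d) (v : Fin d → ℂ) (i : Fin d) : ℝ :=
  Complex.normSq (s.w v i)

lemma nn_nonneg (s : SpecData d) (v : Fin d → ℂ) (i : Fin d) : 0 ≤ s.nn v i :=
  Complex.normSq_nonneg _

lemma star_w (s : SpecData d) (v : Fin d → ℂ) : star (s.w v) = star v ᵥ* s.U := by
  rw [w, Matrix.star_mulVec, Matrix.star_eq_conjTranspose, Matrix.conjTranspose_conjTranspose]

lemma dot_mulVec_frame (s : SpecData d) (v u : Fin d → ℂ) :
    star v ⬝ᵥ (s.U *ᵥ u) = star (s.w v) ⬝ᵥ u := by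
  rw [Matrix.dotProduct_mulVec, star_w]

lemma dot_frame' (s : SpecData d) (v u : Fin d → ℂ) :
    star v ⬝ᵥ u = star (s.w v) ⬝ᵥ (s.w u) := by
  conv_lhs => rw [show u = (1 : Matrix (Fin d) (Fin d) ℂ) *ᵥ u from (Matrix.one_mulVec u).symm,
    ← s.hU, ← Matrix.mulVec_mulVec, dot_mulVec_frame]
  rfl

lemma framed_mulVec (s : SpecData d) (g : ℝ → ℝ) (v : Fin d → ℂ) :
    s.framed g *ᵥ v = s.U *ᵥ (Matrix.diagonal (fun i => (g (s.e i) : ℂ)) *ᵥ s.w v) := by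
  rw [w, Matrix.mulVec_mulVec, Matrix.mulVec_mulVec, framed, mul_assoc]

lemma qf_framed (s : SpecData d) (g : ℝ → ℝ) (v : Fin d → ℂ) :
    star v ⬝ᵥ (s.framed g *ᵥ v) = ((∑ i, g (s.e i) * s.nn v i : ℝ) : ℂ) := by
  rw [framed_mulVec, dot_mulVec_frame]
  rw [dotProduct]
  push_cast
  refine Finset.sum_congr rfl fun i _ => ?_
  rw [Matrix.mulVec_diagonal, Pi.star_apply]
  rw [show (star (s.w v i) : ℂ) = (starRingEnd ℂ) (s.w v i) from rfl]
  rw [show (starRingEnd ℂ) (s.w v i) * ((g (s.e i) : ℂ) * s.w v i)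
      = (g (s.e i) : ℂ) * (s.w v i * (starRingEnd ℂ) (s.w v i)) from by ring, Complex.mul_conj]
  rw [nn]

lemma re_qf_framed (s : SpecData d) (g : ℝ → ℝ) (v : Fin d → ℂ) :
    (star v ⬝ᵥ (s.framed g *ᵥ v)).re = ∑ i, g (s.e i) * s.nn v i := by
  rw [qf_framed]; exact Complex.ofReal_re _

lemma framed_isHermitian (s : SpecData d) (g : ℝ → ℝ) : (s.framed g).IsHermitian := by
  unfold Matrix.IsHermitian framed
  rw [← Matrix.star_eq_conjTranspose]
  simp only [StarMul.star_mul, star_star]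
  have hdiag : star (Matrix.diagonal fun i => (g (s.e i) : ℂ))
      = Matrix.diagonal fun i => (g (s.e i) : ℂ) := by
    rw [Matrix.star_eq_conjTranspose, Matrix.diagonal_conjTranspose]
    have : star (fun i => (g (s.e i) : ℂ)) = fun i => (g (s.e i) : ℂ) := by
      funext i
      simp [Pi.star_apply, Complex.conj_ofReal]
    rw [this]
  rw [hdiag, mul_assoc]

lemma framed_mul (s : SpecData d) (g₁ g₂ : ℝ → ℝ) :
    s.framed g₁ * s.framed g₂ = s.framed (fun x => g₁ x * g₂ x) := by
  unfold framed
  calc s.U * Matrix.diagonal (fun i => (g₁ (s.e i) : ℂ)) * star s.U *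
        (s.U * Matrix.diagonal (fun i => (g₂ (s.e i) : ℂ)) * star s.U)
      = s.U * Matrix.diagonal (fun i => (g₁ (s.e i) : ℂ)) * (star s.U * s.U) *
        Matrix.diagonal (fun i => (g₂ (s.e i) : ℂ)) * star s.U := by simp only [mul_assoc]
    _ = s.U * (Matrix.diagonal (fun i => (g₁ (s.e i) : ℂ)) *
        Matrix.diagonal (fun i => (g₂ (s.e i) : ℂ))) * star s.U := by
        rw [s.hU', mul_one]; simp only [mul_assoc]
    _ = s.U * Matrix.diagonal (fun i => ((g₁ (s.e i) * g₂ (s.e i) : ℝ) : ℂ)) * star s.U := by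
        rw [Matrix.diagonal_mul_diagonal]
        have : (fun i => (g₁ (s.e i) : ℂ) * (g₂ (s.e i) : ℂ))
            = fun i => ((g₁ (s.e i) * g₂ (s.e i) : ℝ) : ℂ) := by
          funext i; push_cast; ring
        rw [this]

lemma framed_trace (s : SpecData d) (g : ℝ → ℝ) :
    (s.framed g).trace = ((∑ i, g (s.e i) : ℝ) : ℂ) := by
  unfold framed
  rw [Matrix.trace_mul_comm (s.U * Matrix.diagonal fun i => (g (s.e i) : ℂ)) (star s.U),
    ← mul_assoc, s.hU', one_mul, Matrix.trace_diagonal]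
  push_cast
  rfl

lemma framed_congr (s : SpecData d) {g₁ g₂ : ℝ → ℝ} (h : ∀ i, g₁ (s.e i) = g₂ (s.e i)) :
    s.framed g₁ = s.framed g₂ := by
  unfold framed
  have : (fun i => (g₁ (s.e i) : ℂ)) = fun i => (g₂ (s.e i) : ℂ) := by
    funext i; rw [h i]
  rw [this]

lemma framed_one (s : SpecData d) : s.framed (fun _ => 1) = 1 := by
  unfold framed
  rw [show Matrix.diagonal (fun _ : Fin d => ((1 : ℝ) : ℂ)) = 1 by
      push_cast; exact Matrix.diagonal_one, mul_one, s.hU]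

lemma X_eq_framed (s : SpecData d) : s.X = s.framed (fun x => x) := s.hX

lemma qf_X (s : SpecData d) (v : Fin d → ℂ) :
    star v ⬝ᵥ (s.X *ᵥ v) = ((∑ i, s.e i * s.nn v i : ℝ) : ℂ) := by
  rw [s.X_eq_framed, qf_framed]

lemma trace_X (s : SpecData d) : s.X.trace = ((∑ i, s.e i : ℝ) : ℂ) := by
  rw [s.X_eq_framed, framed_trace]

lemma sum_nn (s : SpecData d) (v : Fin d → ℂ) :
    ∑ i, s.nn v i = ∑ i, Complex.normSq (v i) := by
  have h1 : star v ⬝ᵥ ((1 : Matrix (Fin d) (Fin d) ℂ) *ᵥ v)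
      = ((∑ i, (1 : ℝ) * s.nn v i : ℝ) : ℂ) := by
    rw [← s.framed_one, qf_framed]
  rw [Matrix.one_mulVec] at h1
  have h2 : star v ⬝ᵥ v = ((∑ i, Complex.normSq (v i) : ℝ) : ℂ) := by
    rw [dotProduct]
    push_cast
    refine Finset.sum_congr rfl fun i _ => ?_
    rw [Pi.star_apply, show (star (v i) : ℂ) = (starRingEnd ℂ) (v i) from rfl, mul_comm,
      Complex.mul_conj]
  rw [h2] at h1
  have := Complex.ofReal_inj.mp h1.symm
  simpa using this

end SpecData

end AC

section AC2

open Complex Set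

variable {d : ℕ}

namespace SpecData

/-- Spectral data of a positive semidefinite matrix. -/
noncomputable def ofPSD {X : Matrix (Fin d) (Fin d) ℂ} (h : X.PosSemidef) : SpecData d where
  X := X
  U := h.1.eigenvectorUnitary
  e := h.1.eigenvalues
  hU := Matrix.mem_unitaryGroup_iff.mp h.1.eigenvectorUnitary.2
  hU' := Matrix.mem_unitaryGroup_iff'.mp h.1.eigenvectorUnitary.2
  hX := by
    conv_lhs => rw [h.1.spectral_theorem]
    rfl
  he := h.eigenvalues_nonneg

@[simp] lemma ofPSD_X {X : Matrix (Fin d) (Fin d) ℂ} (h : X.PosSemidef) : (ofPSD h).X = X := rfl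

/-- Scaling spectral data by a nonnegative real. -/
noncomputable def scale (s : SpecData d) (c : ℝ) (hc : 0 ≤ c) : SpecData d where
  X := (c : ℂ) • s.X
  U := s.U
  e := fun i => c * s.e i
  hU := s.hU
  hU' := s.hU'
  hX := by
    have hdiag : Matrix.diagonal (fun i => ((c * s.e i : ℝ) : ℂ))
        = (c : ℂ) • Matrix.diagonal (fun i => (s.e i : ℂ)) := by
      ext i j
      rcases eq_or_ne i j with rfl | h
      · simp only [Matrix.diagonal_apply_eq, Matrix.smul_apply, smul_eq_mul]
        push_cast
        ring
      · simp [Matrix.diagonal_apply_ne _ h, Matrix.smul_apply]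
    show (c : ℂ) • s.X = s.U * Matrix.diagonal (fun i => ((c * s.e i : ℝ) : ℂ)) * star s.U
    rw [s.hX, hdiag]
    calc (c : ℂ) • (s.U * Matrix.diagonal (fun i => (s.e i : ℂ)) * star s.U)
        = ((c : ℂ) • (s.U * Matrix.diagonal (fun i => (s.e i : ℂ)))) * star s.U := by
          rw [Matrix.smul_mul]
      _ = (s.U * ((c : ℂ) • Matrix.diagonal (fun i => (s.e i : ℂ)))) * star s.U := by
          rw [Matrix.mul_smul]
  he := fun i => mul_nonneg hc (s.he i)

@[simp] lemma scale_X (s : SpecData d) (c : ℝ) (hc : 0 ≤ c) :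
    (s.scale c hc).X = (c : ℂ) • s.X := rfl

@[simp] lemma scale_e (s : SpecData d) (c : ℝ) (hc : 0 ≤ c) (i : Fin d) :
    (s.scale c hc).e i = c * s.e i := rfl

/-- `t • X + (1 - t) • 1` as a framed matrix. -/
noncomputable def shift (s : SpecData d) (t : ℝ) : Matrix (Fin d) (Fin d) ℂ :=
  s.framed (fun x => t * x + (1 - t))

lemma shift_eq (s : SpecData d) (t : ℝ) :
    s.shift t = (t : ℂ) • s.X + ((1 - t : ℝ) : ℂ) • 1 := by
  rw [shift, s.hX]
  unfold framed
  have : (fun i => ((t * s.e i + (1 - t) : ℝ) : ℂ))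
      = (fun i => (t : ℂ) * (s.e i : ℂ) + ((1 - t : ℝ) : ℂ)) := by
    funext i; push_cast; ring
  rw [this]
  have hdiag : Matrix.diagonal (fun i => (t : ℂ) * (s.e i : ℂ) + ((1 - t : ℝ) : ℂ))
      = (t : ℂ) • Matrix.diagonal (fun i => (s.e i : ℂ))
        + ((1 - t : ℝ) : ℂ) • (1 : Matrix (Fin d) (Fin d) ℂ) := by
    rw [Matrix.smul_one_eq_diagonal, ← Matrix.diagonal_smul, ← Matrix.diagonal_add]
    congr 1
  rw [hdiag, Matrix.mul_add, Matrix.add_mul, Matrix.mul_smul, Matrix.smul_mul,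
    Matrix.mul_smul, Matrix.smul_mul, mul_one, s.hU]

/-- Resolvent-type framed matrix. -/
noncomputable def res (s : SpecData d) (t : ℝ) : Matrix (Fin d) (Fin d) ℂ :=
  s.framed (fun x => (t * x + (1 - t))⁻¹)

lemma denom_pos (s : SpecData d) {t : ℝ} (ht : t ∈ Set.Ioo (0 : ℝ) 1) (i : Fin d) :
    0 < t * s.e i + (1 - t) := by
  have h1 := s.he i
  have h2 := ht.1
  have h3 := ht.2
  nlinarith

lemma shift_mul_res (s : SpecData d) {t : ℝ} (ht : t ∈ Set.Ioo (0 : ℝ) 1) :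
    s.shift t * s.res t = 1 := by
  rw [shift, res, framed_mul]
  rw [s.framed_congr (g₂ := fun _ => 1) (fun i => by
    field_simp [ne_of_gt (s.denom_pos ht i)]), framed_one]

lemma shift_mulVec_res (s : SpecData d) {t : ℝ} (ht : t ∈ Set.Ioo (0 : ℝ) 1) (v : Fin d → ℂ) :
    s.shift t *ᵥ (s.res t *ᵥ v) = v := by
  rw [Matrix.mulVec_mulVec, s.shift_mul_res ht, Matrix.one_mulVec]

/-- quadratic form of the resolvent -/
lemma re_qf_res (s : SpecData d) (t : ℝ) (v : Fin d → ℂ) :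
    (star v ⬝ᵥ (s.res t *ᵥ v)).re = ∑ i, (t * s.e i + (1 - t))⁻¹ * s.nn v i :=
  s.re_qf_framed _ v

/-- The key elementary scalar inequality. -/
lemma scalar_var {a b : ℂ} {c : ℝ} (hc : 0 < c) :
    2 * ((starRingEnd ℂ) a * b).re ≤ c⁻¹ * Complex.normSq a + c * Complex.normSq b := by
  have h0 : 0 ≤ Complex.normSq (a - (c : ℂ) * b) := Complex.normSq_nonneg _
  rw [Complex.normSq_sub] at h0
  have h1 : Complex.normSq ((c : ℂ) * b) = c ^ 2 * Complex.normSq b := by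
    rw [Complex.normSq_mul, Complex.normSq_ofReal]; ring
  have h2 : (a * (starRingEnd ℂ) ((c : ℂ) * b)).re = c * (((starRingEnd ℂ) a) * b).re := by
    have hcc : (starRingEnd ℂ) ((c : ℂ) * b) = (c : ℂ) * (starRingEnd ℂ) b := by
      rw [RingHom.map_mul, Complex.conj_ofReal]
    rw [hcc]
    have h3 : a * ((c : ℂ) * (starRingEnd ℂ) b) = (c : ℂ) * (a * (starRingEnd ℂ) b) := by ring
    rw [h3, Complex.re_ofReal_mul]
    have h4 : (a * (starRingEnd ℂ) b).re = (((starRingEnd ℂ) a) * b).re := by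
      rw [← Complex.conj_re (a * (starRingEnd ℂ) b), RingHom.map_mul, Complex.conj_conj]
    rw [h4]
  rw [h1, h2] at h0
  have hcinv : 0 < c⁻¹ := inv_pos.mpr hc
  have expand : c⁻¹ * Complex.normSq a + c * Complex.normSq b - 2 * (((starRingEnd ℂ) a) * b).re
      = c⁻¹ * (Complex.normSq a + c ^ 2 * Complex.normSq b - 2 * (c * (((starRingEnd ℂ) a) * b).re)) := by
    field_simp
  nlinarith [mul_nonneg hcinv.le h0]

/-- Variational inequality for the shifted quadratic form. -/
lemma varineq (s : SpecData d) {t : ℝ} (ht : t ∈ Set.Ioo (0 : ℝ) 1) (u v : Fin d → ℂ) :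
    2 * (star v ⬝ᵥ u).re - (star u ⬝ᵥ (s.shift t *ᵥ u)).re
      ≤ ∑ i, (t * s.e i + (1 - t))⁻¹ * s.nn v i := by
  have hqf : (star u ⬝ᵥ (s.shift t *ᵥ u)).re = ∑ i, (t * s.e i + (1 - t)) * s.nn u i :=
    s.re_qf_framed _ u
  have hdot : (star v ⬝ᵥ u).re = ∑ i, (((starRingEnd ℂ) (s.w v i)) * (s.w u i)).re := by
    rw [s.dot_frame' v u, dotProduct, Complex.re_sum]
    refine Finset.sum_congr rfl fun i _ => ?_
    rfl
  rw [hqf, hdot, Finset.mul_sum, ← Finset.sum_sub_distrib]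
  refine Finset.sum_le_sum fun i _ => ?_
  have := scalar_var (a := s.w v i) (b := s.w u i) (s.denom_pos ht i)
  unfold nn
  linarith

/-- the self-consistency identity for the resolvent -/
lemma re_qf_shift_res (s : SpecData d) {t : ℝ} (ht : t ∈ Set.Ioo (0 : ℝ) 1) (v : Fin d → ℂ) :
    (star (s.res t *ᵥ v) ⬝ᵥ (s.shift t *ᵥ (s.res t *ᵥ v))).re = (star v ⬝ᵥ (s.res t *ᵥ v)).re := by
  rw [s.shift_mulVec_res ht]
  rw [Matrix.star_dotProduct]
  exact (Complex.conj_re _)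

end SpecData

end AC2

section AC3

open Complex Set

variable {d : ℕ}

namespace SpecData

/-- Convexity of the resolvent quadratic form. -/
lemma convex_res (s₁ s₂ s₀ : SpecData d) {p q : ℝ} (hp : 0 ≤ p) (hq : 0 ≤ q)
    (hpq : p + q = 1) (hsum : s₀.X = (p : ℂ) • s₁.X + (q : ℂ) • s₂.X)
    {t : ℝ} (ht : t ∈ Set.Ioo (0 : ℝ) 1) (v : Fin d → ℂ) :
    ∑ i, (t * s₀.e i + (1 - t))⁻¹ * s₀.nn v i
      ≤ p * ∑ i, (t * s₁.e i + (1 - t))⁻¹ * s₁.nn v i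
        + q * ∑ i, (t * s₂.e i + (1 - t))⁻¹ * s₂.nn v i := by
  set u := s₀.res t *ᵥ v with hu
  have hshift : s₀.shift t = (p : ℂ) • s₁.shift t + (q : ℂ) • s₂.shift t := by
    rw [shift_eq, shift_eq, shift_eq, hsum]
    have hpq' : (p : ℂ) + (q : ℂ) = 1 := by exact_mod_cast congrArg (Complex.ofReal) hpq
    simp only [smul_add, smul_smul]
    rw [mul_comm (p : ℂ) (t : ℂ), mul_comm (q : ℂ) (t : ℂ)]
    have hone : ((1 - t : ℝ) : ℂ) • (1 : Matrix (Fin d) (Fin d) ℂ)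
        = ((p : ℂ) * ((1 - t : ℝ) : ℂ)) • (1 : Matrix (Fin d) (Fin d) ℂ)
          + ((q : ℂ) * ((1 - t : ℝ) : ℂ)) • (1 : Matrix (Fin d) (Fin d) ℂ) := by
      rw [← add_smul, ← add_mul, hpq', one_mul]
    rw [hone]
    abel
  have hqf0 : (star u ⬝ᵥ (s₀.shift t *ᵥ u)).re = (star v ⬝ᵥ u).re := s₀.re_qf_shift_res ht v
  have hqfsplit : (star u ⬝ᵥ (s₀.shift t *ᵥ u)).re
      = p * (star u ⬝ᵥ (s₁.shift t *ᵥ u)).re + q * (star u ⬝ᵥ (s₂.shift t *ᵥ u)).re := by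
    rw [hshift, Matrix.add_mulVec, dotProduct_add, Matrix.smul_mulVec,
      Matrix.smul_mulVec, dotProduct_smul, dotProduct_smul]
    rw [Complex.add_re, smul_eq_mul, smul_eq_mul, Complex.re_ofReal_mul, Complex.re_ofReal_mul]
  have hvarl : (star v ⬝ᵥ u).re = ∑ i, (t * s₀.e i + (1 - t))⁻¹ * s₀.nn v i := by
    rw [hu, re_qf_res]
  have h1 := s₁.varineq ht u v
  have h2 := s₂.varineq ht u v
  have h1' := mul_le_mul_of_nonneg_left h1 hp
  have h2' := mul_le_mul_of_nonneg_left h2 hq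
  have hcomb : p * (2 * (star v ⬝ᵥ u).re - (star u ⬝ᵥ (s₁.shift t *ᵥ u)).re)
      + q * (2 * (star v ⬝ᵥ u).re - (star u ⬝ᵥ (s₂.shift t *ᵥ u)).re)
      = (star v ⬝ᵥ u).re := by
    have h5 : p * (2 * (star v ⬝ᵥ u).re) + q * (2 * (star v ⬝ᵥ u).re) = 2 * (star v ⬝ᵥ u).re := by
      linear_combination (2 * (star v ⬝ᵥ u).re) * hpq
    nlinarith [hqfsplit, hqf0, h5]
  linarith [h1', h2']

/-- `re` of a quadratic form of `X` is nonnegative. -/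
lemma re_qf_X_nonneg (s : SpecData d) (v : Fin d → ℂ) :
    0 ≤ (star v ⬝ᵥ (s.X *ᵥ v)).re := by
  rw [s.qf_X, Complex.ofReal_re]
  exact Finset.sum_nonneg fun i _ => mul_nonneg (s.he i) (s.nn_nonneg v i)

/-- Anti-monotonicity of the resolvent: if `s₀.X = sB.X + sC.X` then
`res s₀ ≤ res sB` in the quadratic-form sense. -/
lemma res_antitone (sB sC s₀ : SpecData d) (hsum : s₀.X = sB.X + sC.X)
    {t : ℝ} (ht : t ∈ Set.Ioo (0 : ℝ) 1) (z : Fin d → ℂ) :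
    (star z ⬝ᵥ (s₀.res t *ᵥ z)).re ≤ (star z ⬝ᵥ (sB.res t *ᵥ z)).re := by
  set u := s₀.res t *ᵥ z with hu
  have hshift : s₀.shift t = sB.shift t + (t : ℂ) • sC.X := by
    rw [shift_eq, shift_eq, hsum, smul_add]
    abel
  have hqf0 : (star u ⬝ᵥ (s₀.shift t *ᵥ u)).re = (star z ⬝ᵥ u).re := s₀.re_qf_shift_res ht z
  have hsplit : (star u ⬝ᵥ (s₀.shift t *ᵥ u)).re
      = (star u ⬝ᵥ (sB.shift t *ᵥ u)).re + t * (star u ⬝ᵥ (sC.X *ᵥ u)).re := by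
    rw [hshift, Matrix.add_mulVec, dotProduct_add, Matrix.smul_mulVec,
      dotProduct_smul, Complex.add_re, smul_eq_mul, Complex.re_ofReal_mul]
  have hC : 0 ≤ (star u ⬝ᵥ (sC.X *ᵥ u)).re := sC.re_qf_X_nonneg u
  have hvar := sB.varineq ht u z
  rw [← sB.re_qf_res t z] at hvar
  have hl : (star z ⬝ᵥ (s₀.res t *ᵥ z)).re = (star z ⬝ᵥ u).re := by rw [hu]
  have ht0 : 0 ≤ t := le_of_lt ht.1
  nlinarith [mul_nonneg ht0 hC]

/-- Positivity of `re (tr (s.X * M))` for `M` with nonnegative quadratic form. -/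
lemma trace_mul_nonneg (s : SpecData d) (M : Matrix (Fin d) (Fin d) ℂ)
    (hM : ∀ z : Fin d → ℂ, 0 ≤ (star z ⬝ᵥ (M *ᵥ z)).re) :
    0 ≤ (s.X * M).trace.re := by
  have hXM : (s.X * M).trace = ((star s.U * M * s.U) * Matrix.diagonal (fun i => (s.e i : ℂ))).trace := by
    rw [s.hX]
    calc (s.U * Matrix.diagonal (fun i => (s.e i : ℂ)) * star s.U * M).trace
        = ((s.U * Matrix.diagonal (fun i => (s.e i : ℂ))) * (star s.U * M)).trace := by
          simp only [mul_assoc]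
      _ = ((star s.U * M) * (s.U * Matrix.diagonal (fun i => (s.e i : ℂ)))).trace :=
          Matrix.trace_mul_comm _ _
      _ = ((star s.U * M * s.U) * Matrix.diagonal (fun i => (s.e i : ℂ))).trace := by
          simp only [mul_assoc]
  rw [hXM, Matrix.trace]
  have hdiagentry : ∀ i, ((star s.U * M * s.U) * Matrix.diagonal (fun i => (s.e i : ℂ))).diag i
      = (star s.U * M * s.U) i i * (s.e i : ℂ) := fun i => Matrix.mul_diagonal _ _ _ _
  have hentry : ∀ i : Fin d, (star s.U * M * s.U) i i
      = star (fun k => s.U k i) ⬝ᵥ (M *ᵥ (fun k => s.U k i)) := by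
    intro i
    simp only [Matrix.mul_apply, dotProduct, Matrix.mulVec, Matrix.star_apply,
      Matrix.star_eq_conjTranspose, Matrix.conjTranspose_apply, Pi.star_apply,
      dotProduct, Finset.sum_mul, Finset.mul_sum]
    rw [Finset.sum_comm]
    refine Finset.sum_congr rfl fun a _ => Finset.sum_congr rfl fun b _ => ?_
    ring
  rw [Complex.re_sum]
  refine Finset.sum_nonneg fun i _ => ?_
  rw [hdiagentry i, hentry i]
  rw [show star (fun k => s.U k i) ⬝ᵥ (M *ᵥ fun k => s.U k i) * (s.e i : ℂ)
      = (s.e i : ℂ) * (star (fun k => s.U k i) ⬝ᵥ (M *ᵥ fun k => s.U k i)) from mul_comm _ _]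
  rw [Complex.re_ofReal_mul]
  exact mul_nonneg (s.he i) (hM _)

/-- trace of `X * res t` as a scalar sum -/
lemma trace_X_mul_res (s : SpecData d) (t : ℝ) :
    (s.X * s.res t).trace.re = ∑ i, s.e i * (t * s.e i + (1 - t))⁻¹ := by
  rw [s.X_eq_framed, res, framed_mul, framed_trace, Complex.ofReal_re]

/-- Trace superadditivity of the map `x ↦ x/(t x + 1 - t)`. -/
lemma mono_res (sB sC s₀ : SpecData d) (hsum : s₀.X = sB.X + sC.X)
    {t : ℝ} (ht : t ∈ Set.Ioo (0 : ℝ) 1) :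
    ∑ i, s₀.e i * (t * s₀.e i + (1 - t))⁻¹
      ≤ ∑ i, sB.e i * (t * sB.e i + (1 - t))⁻¹
        + ∑ i, sC.e i * (t * sC.e i + (1 - t))⁻¹ := by
  have hB : 0 ≤ (sB.X * (sB.res t - s₀.res t)).trace.re := by
    refine sB.trace_mul_nonneg _ fun z => ?_
    rw [Matrix.sub_mulVec, dotProduct_sub, Complex.sub_re, sub_nonneg]
    exact res_antitone sB sC s₀ hsum ht z
  have hC : 0 ≤ (sC.X * (sC.res t - s₀.res t)).trace.re := by
    refine sC.trace_mul_nonneg _ fun z => ?_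
    rw [Matrix.sub_mulVec, dotProduct_sub, Complex.sub_re, sub_nonneg]
    have hsum' : s₀.X = sC.X + sB.X := by rw [hsum]; abel
    exact res_antitone sC sB s₀ hsum' ht z
  have hexpand : (s₀.X * s₀.res t).trace.re
      = (sB.X * s₀.res t).trace.re + (sC.X * s₀.res t).trace.re := by
    rw [hsum, Matrix.add_mul, Matrix.trace_add, Complex.add_re]
  have hBexp : (sB.X * (sB.res t - s₀.res t)).trace.re
      = (sB.X * sB.res t).trace.re - (sB.X * s₀.res t).trace.re := by
    rw [Matrix.mul_sub, Matrix.trace_sub, Complex.sub_re]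
  have hCexp : (sC.X * (sC.res t - s₀.res t)).trace.re
      = (sC.X * sC.res t).trace.re - (sC.X * s₀.res t).trace.re := by
    rw [Matrix.mul_sub, Matrix.trace_sub, Complex.sub_re]
  have e0 := s₀.trace_X_mul_res t
  have eB := sB.trace_X_mul_res t
  have eC := sC.trace_X_mul_res t
  linarith [hB, hC]

end SpecData

end AC3

section AC4

set_option maxHeartbeats 2000000

open Complex Set

variable {d : ℕ}

/-- the integrand of the representation of `x log x` -/
noncomputable def phiAC (x t : ℝ) : ℝ := x * (x - 1) / (1 + t * (x - 1))

lemma phiAC_denom_pos {x t : ℝ} (hx : 0 < x) (ht : t ∈ Set.Icc (0:ℝ) 1) :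
    0 < 1 + t * (x - 1) := by
  rcases lt_or_ge t 1 with h | h
  · nlinarith [mul_nonneg ht.1 hx.le]
  · have : t = 1 := le_antisymm ht.2 h
    subst this
    nlinarith

lemma phiAC_denom_pos' {x t : ℝ} (hx : 0 ≤ x) (ht : t ∈ Set.Ioo (0:ℝ) 1) :
    0 < 1 + t * (x - 1) := by
  nlinarith [mul_nonneg ht.1.le hx, ht.2]

lemma phiAC_zero (t : ℝ) : phiAC 0 t = 0 := by simp [phiAC]

lemma phiAC_intervalIntegrable {x : ℝ} (hx : 0 ≤ x) :
    IntervalIntegrable (phiAC x) MeasureTheory.volume 0 1 := by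
  rcases eq_or_lt_of_le hx with h | h
  · have : phiAC x = fun _ => (0:ℝ) := by
      funext t
      rw [← h, phiAC_zero]
    rw [this]
    exact intervalIntegrable_const
  · have hcont : ContinuousOn (phiAC x) (Set.uIcc 0 1) := by
      have : phiAC x = fun t => x * (x - 1) / (1 + t * (x - 1)) := rfl
      rw [this]
      refine ContinuousOn.div continuousOn_const ?_ ?_
      · exact (continuous_const.add (continuous_id.mul continuous_const)).continuousOn
      · intro t htt
        rw [Set.uIcc_of_le (by norm_num : (0:ℝ) ≤ 1)] at htt
        exact ne_of_gt (phiAC_denom_pos h htt)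
    exact hcont.intervalIntegrable

lemma phiAC_integral {x : ℝ} (hx : 0 ≤ x) :
    ∫ t in (0:ℝ)..1, phiAC x t = x * Real.log x := by
  rcases eq_or_lt_of_le hx with h | h
  · subst h
    simp [phiAC]
  · have hderiv : ∀ t ∈ Set.uIcc (0:ℝ) 1,
        HasDerivAt (fun u => x * Real.log (1 + u * (x - 1))) (phiAC x t) t := by
      intro t htt
      rw [Set.uIcc_of_le (by norm_num : (0:ℝ) ≤ 1)] at htt
      have hd : 0 < 1 + t * (x - 1) := phiAC_denom_pos h htt
      have h1 : HasDerivAt (fun u : ℝ => 1 + u * (x - 1)) (x - 1) t := by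
        simpa using (hasDerivAt_id t).mul_const (x - 1) |>.const_add 1
      have h2 := (h1.log (ne_of_gt hd)).const_mul x
      refine h2.congr_deriv ?_
      rw [phiAC]
      field_simp
    rw [intervalIntegral.integral_eq_sub_of_hasDerivAt hderiv (phiAC_intervalIntegrable hx)]
    norm_num

lemma phiAC_decomp1 {x t : ℝ} (hx : 0 ≤ x) (ht : t ∈ Set.Ioo (0:ℝ) 1) :
    phiAC x t = x / t - 1 / t ^ 2 + ((1 - t) / t ^ 2) * (t * x + (1 - t))⁻¹ := by
  have hd : 0 < 1 + t * (x - 1) := phiAC_denom_pos' hx ht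
  have hd' : t * x + (1 - t) ≠ 0 := by nlinarith
  have ht0 : t ≠ 0 := ne_of_gt ht.1
  rw [phiAC]
  rw [show 1 + t * (x - 1) = t * x + (1 - t) by ring]
  rw [div_eq_iff hd', add_mul, mul_assoc ((1 - t) / t ^ 2), inv_mul_cancel₀ hd', mul_one]
  field_simp
  ring

lemma phiAC_decomp2 {x t : ℝ} (hx : 0 ≤ x) (ht : t ∈ Set.Ioo (0:ℝ) 1) :
    phiAC x t = x / t - (1 / t) * (x * (t * x + (1 - t))⁻¹) := by
  have hd : 0 < 1 + t * (x - 1) := phiAC_denom_pos' hx ht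
  have hd' : t * x + (1 - t) ≠ 0 := by nlinarith
  have ht0 : t ≠ 0 := ne_of_gt ht.1
  rw [phiAC]
  rw [show 1 + t * (x - 1) = t * x + (1 - t) by ring]
  rw [← div_eq_mul_inv, one_div_mul_eq_div, div_div, div_sub_div _ _ ht0 (by positivity), div_eq_div_iff hd' (by positivity)]
  ring

/-- `(cx)log(cx) = c (x log x) + (c log c) x` for nonnegative reals (with `log 0 = 0`). -/
lemma xlogx_scale {c x : ℝ} (hc : 0 ≤ c) (hx : 0 ≤ x) :
    (c * x) * Real.log (c * x) = c * (x * Real.log x) + (c * Real.log c) * x := by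
  rcases eq_or_lt_of_le hc with h | hcpos
  · rw [← h]; simp
  rcases eq_or_lt_of_le hx with h | hxpos
  · rw [← h]; simp
  rw [Real.log_mul (ne_of_gt hcpos) (ne_of_gt hxpos)]
  ring

namespace SpecData

lemma dot_star_self (v : Fin d → ℂ) :
    star v ⬝ᵥ v = ((∑ i, Complex.normSq (v i) : ℝ) : ℂ) := by
  rw [dotProduct]
  push_cast
  refine Finset.sum_congr rfl fun i _ => ?_
  rw [Pi.star_apply, show (star (v i) : ℂ) = (starRingEnd ℂ) (v i) from rfl, mul_comm,
    Complex.mul_conj]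

/-- the linear forms agree -/
lemma linf_eq (s₁ s₂ s₀ : SpecData d) {p q : ℝ}
    (hsum : s₀.X = (p : ℂ) • s₁.X + (q : ℂ) • s₂.X) (v : Fin d → ℂ) :
    p * (∑ i, s₁.e i * s₁.nn v i) + q * (∑ i, s₂.e i * s₂.nn v i)
      = ∑ i, s₀.e i * s₀.nn v i := by
  have hqf : star v ⬝ᵥ (s₀.X *ᵥ v)
      = (p : ℂ) * (star v ⬝ᵥ (s₁.X *ᵥ v)) + (q : ℂ) * (star v ⬝ᵥ (s₂.X *ᵥ v)) := by
    rw [hsum, Matrix.add_mulVec, dotProduct_add, Matrix.smul_mulVec,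
      Matrix.smul_mulVec, dotProduct_smul, dotProduct_smul,
      smul_eq_mul, smul_eq_mul]
  rw [s₀.qf_X, s₁.qf_X, s₂.qf_X] at hqf
  exact_mod_cast hqf.symm

/-- sum of eigenvalues agree (trace) -/
lemma tracesum_eq (sB sC s₀ : SpecData d) (hsum : s₀.X = sB.X + sC.X) :
    ∑ i, s₀.e i = ∑ i, sB.e i + ∑ i, sC.e i := by
  have htr : s₀.X.trace = sB.X.trace + sC.X.trace := by rw [hsum, Matrix.trace_add]
  rw [s₀.trace_X, sB.trace_X, sC.trace_X] at htr
  exact_mod_cast htr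

/-- **Step 1**: quadratic-form convexity of `x log x`. -/
lemma step1 (s₁ s₂ s₀ : SpecData d) {p q : ℝ} (hp : 0 ≤ p) (hq : 0 ≤ q)
    (hpq : p + q = 1) (hsum : s₀.X = (p : ℂ) • s₁.X + (q : ℂ) • s₂.X) (v : Fin d → ℂ) :
    ∑ i, (s₀.e i * Real.log (s₀.e i)) * s₀.nn v i
      ≤ p * ∑ i, (s₁.e i * Real.log (s₁.e i)) * s₁.nn v i
        + q * ∑ i, (s₂.e i * Real.log (s₂.e i)) * s₂.nn v i := by
  -- the three sum-functions of t
  set S : SpecData d → ℝ → ℝ := fun s t => ∑ i, s.nn v i * phiAC (s.e i) t with hS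
  have hint : ∀ s : SpecData d, IntervalIntegrable (S s) MeasureTheory.volume 0 1 := by
    intro s
    have he : S s = ∑ i, (fun t => s.nn v i * phiAC (s.e i) t) := by
      funext t
      simp [hS, Finset.sum_apply]
    rw [he]
    exact IntervalIntegrable.sum _ fun i _ => (phiAC_intervalIntegrable (s.he i)).const_mul _
  have hval : ∀ s : SpecData d,
      ∫ t in (0:ℝ)..1, S s t = ∑ i, s.nn v i * (s.e i * Real.log (s.e i)) := by
    intro s
    simp only [hS]
    rw [intervalIntegral.integral_finset_sum
      (fun i _ => (phiAC_intervalIntegrable (s.he i)).const_mul _)]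
    refine Finset.sum_congr rfl fun i _ => ?_
    rw [intervalIntegral.integral_const_mul, phiAC_integral (s.he i)]
  -- the combination
  set F : ℝ → ℝ := fun t => p * S s₁ t + q * S s₂ t - S s₀ t with hF
  have hFint : ∫ t in (0:ℝ)..1, F t
      = p * (∑ i, s₁.nn v i * (s₁.e i * Real.log (s₁.e i)))
        + q * (∑ i, s₂.nn v i * (s₂.e i * Real.log (s₂.e i)))
        - ∑ i, s₀.nn v i * (s₀.e i * Real.log (s₀.e i)) := by
    simp only [hF]
    rw [intervalIntegral.integral_sub (((hint s₁).const_mul p).add ((hint s₂).const_mul q))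
      (hint s₀)]
    rw [intervalIntegral.integral_add ((hint s₁).const_mul p) ((hint s₂).const_mul q)]
    rw [intervalIntegral.integral_const_mul, intervalIntegral.integral_const_mul]
    rw [hval s₁, hval s₂, hval s₀]
  have hI1 := linf_eq s₁ s₂ s₀ hsum v
  have hI2 : p * (∑ i, s₁.nn v i) + q * (∑ i, s₂.nn v i) = ∑ i, s₀.nn v i := by
    rw [s₁.sum_nn, s₂.sum_nn, s₀.sum_nn, ← add_mul, hpq, one_mul]
  have hFpos : ∀ t ∈ Set.Ioo (0:ℝ) 1, 0 ≤ F t := by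
    intro t ht
    have hexp : ∀ s : SpecData d, S s t
        = (∑ i, s.e i * s.nn v i) / t - (∑ i, s.nn v i) / t ^ 2
          + ((1 - t) / t ^ 2) * (∑ i, (t * s.e i + (1 - t))⁻¹ * s.nn v i) := by
      intro s
      simp only [hS]
      rw [Finset.sum_div, Finset.sum_div, Finset.mul_sum, ← Finset.sum_sub_distrib,
        ← Finset.sum_add_distrib]
      refine Finset.sum_congr rfl fun i _ => ?_
      rw [phiAC_decomp1 (s.he i) ht]
      ring
    have hres := convex_res s₁ s₂ s₀ hp hq hpq hsum ht v
    have hcoef : 0 ≤ (1 - t) / t ^ 2 := div_nonneg (by linarith [ht.2]) (sq_nonneg t)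
    have hFt : F t = ((1 - t) / t ^ 2) *
        (p * (∑ i, (t * s₁.e i + (1 - t))⁻¹ * s₁.nn v i)
          + q * (∑ i, (t * s₂.e i + (1 - t))⁻¹ * s₂.nn v i)
          - ∑ i, (t * s₀.e i + (1 - t))⁻¹ * s₀.nn v i) := by
      simp only [hF]
      rw [hexp s₁, hexp s₂, hexp s₀]
      linear_combination (1 / t) * hI1 - (1 / t ^ 2) * hI2
    rw [hFt]
    exact mul_nonneg hcoef (by linarith [hres])
  have hFnonneg : 0 ≤ ∫ t in (0:ℝ)..1, F t := by
    rw [intervalIntegral.integral_of_le (by norm_num : (0:ℝ) ≤ 1),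
      MeasureTheory.integral_Ioc_eq_integral_Ioo]
    exact MeasureTheory.setIntegral_nonneg measurableSet_Ioo hFpos
  rw [hFint] at hFnonneg
  have hflip : ∀ s : SpecData d, ∑ i, s.nn v i * (s.e i * Real.log (s.e i))
      = ∑ i, (s.e i * Real.log (s.e i)) * s.nn v i := by
    intro s
    exact Finset.sum_congr rfl fun i _ => mul_comm _ _
  rw [hflip s₁, hflip s₂, hflip s₀] at hFnonneg
  linarith

/-- **Step 3**: trace superadditivity of `x log x`. -/
lemma step3 (sB sC s₀ : SpecData d) (hsum : s₀.X = sB.X + sC.X) :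
    ∑ i, sB.e i * Real.log (sB.e i) + ∑ i, sC.e i * Real.log (sC.e i)
      ≤ ∑ i, s₀.e i * Real.log (s₀.e i) := by
  set S : SpecData d → ℝ → ℝ := fun s t => ∑ i, phiAC (s.e i) t with hS
  have hint : ∀ s : SpecData d, IntervalIntegrable (S s) MeasureTheory.volume 0 1 := by
    intro s
    have he : S s = ∑ i, (fun t => phiAC (s.e i) t) := by
      funext t
      simp [hS, Finset.sum_apply]
    rw [he]
    exact IntervalIntegrable.sum _ fun i _ => phiAC_intervalIntegrable (s.he i)
  have hval : ∀ s : SpecData d,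
      ∫ t in (0:ℝ)..1, S s t = ∑ i, s.e i * Real.log (s.e i) := by
    intro s
    simp only [hS]
    rw [intervalIntegral.integral_finset_sum (fun i _ => phiAC_intervalIntegrable (s.he i))]
    exact Finset.sum_congr rfl fun i _ => phiAC_integral (s.he i)
  set F : ℝ → ℝ := fun t => S s₀ t - S sB t - S sC t with hF
  have hFint : ∫ t in (0:ℝ)..1, F t
      = (∑ i, s₀.e i * Real.log (s₀.e i)) - (∑ i, sB.e i * Real.log (sB.e i))
        - ∑ i, sC.e i * Real.log (sC.e i) := by
    simp only [hF]
    rw [intervalIntegral.integral_sub ((hint s₀).sub (hint sB)) (hint sC),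
      intervalIntegral.integral_sub (hint s₀) (hint sB), hval s₀, hval sB, hval sC]
  have hI1 := tracesum_eq sB sC s₀ hsum
  have hFpos : ∀ t ∈ Set.Ioo (0:ℝ) 1, 0 ≤ F t := by
    intro t ht
    have hexp : ∀ s : SpecData d, S s t
        = (∑ i, s.e i) / t - (1 / t) * (∑ i, s.e i * (t * s.e i + (1 - t))⁻¹) := by
      intro s
      simp only [hS]
      rw [Finset.sum_div, Finset.mul_sum, ← Finset.sum_sub_distrib]
      refine Finset.sum_congr rfl fun i _ => ?_
      rw [phiAC_decomp2 (s.he i) ht]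
    have hres := mono_res sB sC s₀ hsum ht
    have hFt : F t = (1 / t) *
        ((∑ i, sB.e i * (t * sB.e i + (1 - t))⁻¹)
          + (∑ i, sC.e i * (t * sC.e i + (1 - t))⁻¹)
          - ∑ i, s₀.e i * (t * s₀.e i + (1 - t))⁻¹) := by
      simp only [hF]
      rw [hexp s₀, hexp sB, hexp sC]
      linear_combination (1 / t) * hI1
    rw [hFt]
    exact mul_nonneg (one_div_nonneg.mpr ht.1.le) (by linarith [hres])
  have hFnonneg : 0 ≤ ∫ t in (0:ℝ)..1, F t := by
    rw [intervalIntegral.integral_of_le (by norm_num : (0:ℝ) ≤ 1),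
      MeasureTheory.integral_Ioc_eq_integral_Ioo]
    exact MeasureTheory.setIntegral_nonneg measurableSet_Ioo hFpos
  rw [hFint] at hFnonneg
  linarith

end SpecData

end AC4

section AC5

set_option maxHeartbeats 2000000

open Complex Set

variable {d : ℕ}

lemma rsmul_eq_csmul (c : ℝ) (M : Matrix (Fin d) (Fin d) ℂ) : c • M = (c : ℂ) • M := by
  ext i j
  simp [Matrix.smul_apply, Complex.real_smul]

lemma psd_csmul {c : ℝ} (hc : 0 ≤ c) {M : Matrix (Fin d) (Fin d) ℂ} (hM : M.PosSemidef) :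
    ((c : ℂ) • M).PosSemidef := by
  refine Matrix.PosSemidef.of_dotProduct_mulVec_nonneg ?_ ?_
  · unfold Matrix.IsHermitian
    rw [Matrix.conjTranspose_smul, Complex.star_def, Complex.conj_ofReal, hM.1]
  · intro x
    rw [Matrix.smul_mulVec, dotProduct_smul, smul_eq_mul]
    exact mul_nonneg (Complex.zero_le_real.mpr hc) (hM.dotProduct_mulVec_nonneg x)

lemma isHermitian_csmul (c : ℝ) {M : Matrix (Fin d) (Fin d) ℂ} (hM : M.IsHermitian) :
    (((c : ℝ) : ℂ) • M).IsHermitian := by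
  unfold Matrix.IsHermitian
  rw [Matrix.conjTranspose_smul, Complex.star_def, Complex.conj_ofReal, hM]

lemma isHermitian_rsmul (c : ℝ) {M : Matrix (Fin d) (Fin d) ℂ} (hM : M.IsHermitian) :
    (c • M).IsHermitian := by
  rw [rsmul_eq_csmul]
  exact isHermitian_csmul c hM

lemma mXLogX_eq_framed {X : Matrix (Fin d) (Fin d) ℂ} (h : X.PosSemidef) :
    mXLogX X = (SpecData.ofPSD h).framed (fun x => x * Real.log x) := by
  rw [mXLogX, matFun, dif_pos h.1]
  rfl

end AC5


/-- **Almost concavity of `x ↦ -x log x` as an operator inequality**. -/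
theorem almost_concavity_xlogx {d : ℕ}
    (A₁ A₂ : Matrix (Fin d) (Fin d) ℂ)
    (h₁ : A₁.PosSemidef) (h₂ : A₂.PosSemidef)
    (p : ℝ) (hp : p ∈ Set.Icc (0:ℝ) 1) :
    ((-(p * Real.log p * (A₁.trace).re) - (1 - p) * Real.log (1 - p) * (A₂.trace).re) •
        (1 : Matrix (Fin d) (Fin d) ℂ)
      + (-(p • mXLogX A₁) - (1 - p) • mXLogX A₂)
      + mXLogX (p • A₁ + (1 - p) • A₂)).PosSemidef := by
  classical
  obtain ⟨hp0, hp1⟩ := hp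
  set q : ℝ := 1 - p with hqdef
  have hq0 : 0 ≤ q := by simp only [hqdef]; linarith
  have hpq : p + q = 1 := by simp only [hqdef]; ring
  set A : Matrix (Fin d) (Fin d) ℂ := p • A₁ + q • A₂ with hA_def
  have hA : A.PosSemidef := by
    rw [hA_def, rsmul_eq_csmul, rsmul_eq_csmul]
    exact (psd_csmul hp0 h₁).add (psd_csmul hq0 h₂)
  set s₁ := SpecData.ofPSD h₁ with hs₁
  set s₂ := SpecData.ofPSD h₂ with hs₂
  set s₀ := SpecData.ofPSD hA with hs₀
  have hsum : s₀.X = (p : ℂ) • s₁.X + (q : ℂ) • s₂.X := by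
    show A = (p : ℂ) • A₁ + (q : ℂ) • A₂
    rw [hA_def, rsmul_eq_csmul, rsmul_eq_csmul]
  set flog : ℝ → ℝ := fun x => x * Real.log x with hflog
  have hX₁ : mXLogX A₁ = s₁.framed flog := mXLogX_eq_framed h₁
  have hX₂ : mXLogX A₂ = s₂.framed flog := mXLogX_eq_framed h₂
  have hX₀ : mXLogX A = s₀.framed flog := mXLogX_eq_framed hA
  -- the PSD defect matrix
  set D : Matrix (Fin d) (Fin d) ℂ :=
    (p : ℂ) • s₁.framed flog + (q : ℂ) • s₂.framed flog - s₀.framed flog with hD_def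
  have hDqf : ∀ z : Fin d → ℂ, star z ⬝ᵥ (D *ᵥ z)
      = ((p * (∑ i, flog (s₁.e i) * s₁.nn z i) + q * (∑ i, flog (s₂.e i) * s₂.nn z i)
          - ∑ i, flog (s₀.e i) * s₀.nn z i : ℝ) : ℂ) := by
    intro z
    rw [hD_def, Matrix.sub_mulVec, Matrix.add_mulVec, Matrix.smul_mulVec,
      Matrix.smul_mulVec, dotProduct_sub, dotProduct_add,
      dotProduct_smul, dotProduct_smul, smul_eq_mul, smul_eq_mul,
      s₁.qf_framed flog z, s₂.qf_framed flog z, s₀.qf_framed flog z]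
    push_cast
    ring
  have hstep1 : ∀ z : Fin d → ℂ,
      ∑ i, flog (s₀.e i) * s₀.nn z i
        ≤ p * (∑ i, flog (s₁.e i) * s₁.nn z i) + q * (∑ i, flog (s₂.e i) * s₂.nn z i) := by
    intro z
    exact SpecData.step1 s₁ s₂ s₀ hp0 hq0 hpq hsum z
  have hDpsd : D.PosSemidef := by
    refine Matrix.PosSemidef.of_dotProduct_mulVec_nonneg ?_ ?_
    · exact (((isHermitian_csmul p (s₁.framed_isHermitian flog)).add
        (isHermitian_csmul q (s₂.framed_isHermitian flog))).sub (s₀.framed_isHermitian flog))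
    · intro z
      rw [hDqf z]
      exact Complex.zero_le_real.mpr (by linarith [hstep1 z])
  set sD := SpecData.ofPSD hDpsd with hsD
  set T : ℝ := p * (∑ i, flog (s₁.e i)) + q * (∑ i, flog (s₂.e i)) - ∑ i, flog (s₀.e i)
    with hT
  have hTrD : ∑ i, sD.e i = T := by
    have h1 : D.trace = ((T : ℝ) : ℂ) := by
      rw [hD_def, Matrix.trace_sub, Matrix.trace_add, Matrix.trace_smul, Matrix.trace_smul,
        s₁.framed_trace, s₂.framed_trace, s₀.framed_trace, hT]
      push_cast
      simp only [smul_eq_mul]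
      try ring
    have h2 : D.trace = ((∑ i, sD.e i : ℝ) : ℂ) := sD.trace_X
    rw [h1] at h2
    exact_mod_cast h2.symm
  -- step 3 : T ≤ h
  set sB := s₁.scale p hp0 with hsB
  set sC := s₂.scale q hq0 with hsC
  have hsum3 : s₀.X = sB.X + sC.X := by
    show A = (p : ℂ) • A₁ + (q : ℂ) • A₂
    rw [hA_def, rsmul_eq_csmul, rsmul_eq_csmul]
  have hsuper := SpecData.step3 sB sC s₀ hsum3
  have hBsum : ∑ i, sB.e i * Real.log (sB.e i)
      = p * (∑ i, flog (s₁.e i)) + (p * Real.log p) * (∑ i, s₁.e i) := by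
    rw [Finset.mul_sum, Finset.mul_sum, ← Finset.sum_add_distrib]
    refine Finset.sum_congr rfl fun i _ => ?_
    have : sB.e i = p * s₁.e i := rfl
    rw [this]
    exact xlogx_scale hp0 (s₁.he i)
  have hCsum : ∑ i, sC.e i * Real.log (sC.e i)
      = q * (∑ i, flog (s₂.e i)) + (q * Real.log q) * (∑ i, s₂.e i) := by
    rw [Finset.mul_sum, Finset.mul_sum, ← Finset.sum_add_distrib]
    refine Finset.sum_congr rfl fun i _ => ?_
    have : sC.e i = q * s₂.e i := rfl
    rw [this]
    exact xlogx_scale hq0 (s₂.he i)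
  have htr₁ : (A₁.trace).re = ∑ i, s₁.e i := by
    have := s₁.trace_X
    rw [show s₁.X = A₁ from rfl] at this
    rw [this, Complex.ofReal_re]
  have htr₂ : (A₂.trace).re = ∑ i, s₂.e i := by
    have := s₂.trace_X
    rw [show s₂.X = A₂ from rfl] at this
    rw [this, Complex.ofReal_re]
  have hTle : T ≤ -(p * Real.log p * (A₁.trace).re) - q * Real.log q * (A₂.trace).re := by
    rw [hT, htr₁, htr₂]
    have hflog0 : ∑ i, flog (s₀.e i) = ∑ i, s₀.e i * Real.log (s₀.e i) := rfl
    linarith [hsuper, hBsum, hCsum]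
  -- final assembly
  refine Matrix.PosSemidef.of_dotProduct_mulVec_nonneg ?_ ?_
  · refine Matrix.IsHermitian.add (Matrix.IsHermitian.add ?_ ?_) ?_
    · exact isHermitian_rsmul _ Matrix.isHermitian_one
    · refine Matrix.IsHermitian.sub ?_ ?_
      · rw [hX₁]
        exact (isHermitian_rsmul p (s₁.framed_isHermitian flog)).neg
      · rw [hX₂]
        exact isHermitian_rsmul q (s₂.framed_isHermitian flog)
    · rw [hX₀]
      exact s₀.framed_isHermitian flog
  · intro x
    set N : ℝ := ∑ i, Complex.normSq (x i) with hN
    have hN0 : 0 ≤ N := Finset.sum_nonneg fun i _ => Complex.normSq_nonneg _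
    set S₁ : ℝ := ∑ i, flog (s₁.e i) * s₁.nn x i with hS₁
    set S₂ : ℝ := ∑ i, flog (s₂.e i) * s₂.nn x i with hS₂
    set S₀ : ℝ := ∑ i, flog (s₀.e i) * s₀.nn x i with hS₀
    -- value of the quadratic form
    have hval : star x ⬝ᵥ
        (((-(p * Real.log p * (A₁.trace).re) - q * Real.log q * (A₂.trace).re) • 1
          + (-(p • mXLogX A₁) - q • mXLogX A₂) + mXLogX A) *ᵥ x)
        = (((-(p * Real.log p * (A₁.trace).re) - q * Real.log q * (A₂.trace).re) * N
            - p * S₁ - q * S₂ + S₀ : ℝ) : ℂ) := by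
      rw [Matrix.add_mulVec, Matrix.add_mulVec, Matrix.sub_mulVec, Matrix.neg_mulVec,
        Matrix.smul_mulVec, Matrix.smul_mulVec, Matrix.smul_mulVec,
        Matrix.one_mulVec]
      rw [dotProduct_add, dotProduct_add, dotProduct_sub,
        dotProduct_neg, dotProduct_smul, dotProduct_smul,
        dotProduct_smul]
      rw [hX₁, hX₂, hX₀, s₁.qf_framed flog x, s₂.qf_framed flog x, s₀.qf_framed flog x,
        SpecData.dot_star_self x]
      rw [← hS₁, ← hS₂, ← hS₀, ← hN]
      rw [Complex.real_smul, Complex.real_smul, Complex.real_smul]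
      push_cast
      ring
    rw [hval]
    refine Complex.zero_le_real.mpr ?_
    -- step 2 : p*S₁ + q*S₂ - S₀ ≤ T * N
    have hDx : (star x ⬝ᵥ (D *ᵥ x)).re = p * S₁ + q * S₂ - S₀ := by
      rw [hDqf x, Complex.ofReal_re, hS₁, hS₂, hS₀]
    have hDx' : (star x ⬝ᵥ (D *ᵥ x)).re = ∑ i, sD.e i * sD.nn x i := by
      have := sD.qf_X x
      rw [show sD.X = D from rfl] at this
      rw [this, Complex.ofReal_re]
    have hnnle : ∀ i, sD.nn x i ≤ N := by
      intro i
      rw [hN, ← sD.sum_nn x]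
      exact Finset.single_le_sum (fun j _ => sD.nn_nonneg x j) (Finset.mem_univ i)
    have hstep2 : p * S₁ + q * S₂ - S₀ ≤ T * N := by
      rw [← hDx, hDx']
      calc ∑ i, sD.e i * sD.nn x i ≤ ∑ i, sD.e i * N :=
            Finset.sum_le_sum fun i _ => mul_le_mul_of_nonneg_left (hnnle i) (sD.he i)
        _ = (∑ i, sD.e i) * N := by rw [Finset.sum_mul]
        _ = T * N := by rw [hTrD]
    have hfin : 0 ≤ (-(p * Real.log p * (A₁.trace).re) - q * Real.log q * (A₂.trace).re) * N
        - p * S₁ - q * S₂ + S₀ := by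
      nlinarith [mul_le_mul_of_nonneg_right hTle hN0]
    linarith [hfin]

end QPaper
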